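/- Let w, r be integers with 2 ≤ r ≤ w and let b_1, ..., b_w be real numbers. Then Σ over all cyclic sf-words e of length w with r occurrences of 's' of Σ_{k=0}^{r-1} F(d^e_k) equals Σ_{j=1}^{w} (w-j-1)! b_j / ( (r-2)! (w-j-(r-1))! ), where b_j = Σ_{k=0}^{w-1} F(ζ(k,j)) as before, and terms with w-j-(r-1) < 0 are zero. For r = 1, the sum equals b_w = w·F(L). -/
import Mathlib


open scoped Classical

/-- The cyclic gap from position `p` to the next element of `S` (cyclically):
the least positive `k` such that `p + k ∈ S`. -/
noncomputable def cycGap {w : ℕ} [NeZero w] (S : Finset (ZMod w)) (p : ZMod w) : ℕ :=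
  sInf {k : ℕ | 0 < k ∧ p + (k : ZMod w) ∈ S}

/-- `zeta ℓ k j = ℓ_k + ℓ_{k+1} + ⋯ + ℓ_{k+j-1}` (indices cyclic mod `w`). -/
def zeta {w : ℕ} [NeZero w] (ℓ : ZMod w → ℕ) (k : ZMod w) (j : ℕ) : ℕ :=
  ∑ i ∈ Finset.range j, ℓ (k + (i : ZMod w))

set_option linter.unusedSectionVars false
set_option linter.unusedVariables false

variable {w : ℕ} [NeZero w]

lemma natCast_zmod_inj {a b : ℕ} (ha : a < w) (hb : b < w) (h : (a : ZMod w) = b) : a = b := by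
  rw [← ZMod.val_cast_of_lt ha, ← ZMod.val_cast_of_lt hb, h]

lemma add_natCast_inj (p : ZMod w) {a b : ℕ} (ha : a < w) (hb : b < w)
    (h : p + (a : ZMod w) = p + b) : a = b :=
  natCast_zmod_inj ha hb (by exact add_left_cancel h)

lemma exists_rep (p q : ZMod w) : ∃ i : ℕ, i < w ∧ q = p + (i : ZMod w) := by
  refine ⟨(q - p).val, ZMod.val_lt _, ?_⟩
  rw [ZMod.natCast_val, ZMod.cast_id]
  ring

lemma cycGap_pos_mem (S : Finset (ZMod w)) (p : ZMod w) (hp : p ∈ S) :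
    0 < cycGap S p ∧ p + (cycGap S p : ZMod w) ∈ S ∧ cycGap S p ≤ w := by
  have hw : (0:ℕ) < w := Nat.pos_of_ne_zero (NeZero.ne w)
  have hwmem : w ∈ {k : ℕ | 0 < k ∧ p + (k : ZMod w) ∈ S} := by
    refine ⟨hw, ?_⟩
    simp [ZMod.natCast_self, hp]
  have h1 := Nat.sInf_mem ⟨w, hwmem⟩
  exact ⟨h1.1, h1.2, Nat.sInf_le hwmem⟩

lemma cycGap_eq_iff (S : Finset (ZMod w)) (p : ZMod w) (hp : p ∈ S) {j : ℕ} (hj : 0 < j) :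
    cycGap S p = j ↔ (p + (j : ZMod w) ∈ S ∧ ∀ k : ℕ, 0 < k → k < j → p + (k : ZMod w) ∉ S) := by
  obtain ⟨h1, h2, h3⟩ := cycGap_pos_mem S p hp
  constructor
  · intro h
    refine ⟨h ▸ h2, fun k hk hkj hmem => ?_⟩
    have := Nat.sInf_le (show k ∈ {k : ℕ | 0 < k ∧ p + (k : ZMod w) ∈ S} from ⟨hk, hmem⟩)
    rw [show sInf {k : ℕ | 0 < k ∧ p + (k : ZMod w) ∈ S} = cycGap S p from rfl, h] at this
    omega
  · rintro ⟨hjm, hmin⟩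
    have hle : cycGap S p ≤ j := Nat.sInf_le ⟨hj, hjm⟩
    rcases Nat.lt_or_ge (cycGap S p) j with hlt | hge
    · exact absurd h2 (hmin _ h1 hlt)
    · omega

lemma count_lemma (r : ℕ) (hr : 2 ≤ r) (p : ZMod w) {j : ℕ} (hj1 : 1 ≤ j) (hjw : j ≤ w) :
    ((Finset.univ.filter (fun e : Finset (ZMod w) =>
        (e.card = r ∧ p ∈ e) ∧ cycGap e p = j)).card)
      = if j + (r - 1) ≤ w then (w - j - 1).choose (r - 2) else 0 := by
  have hw : (0:ℕ) < w := Nat.pos_of_ne_zero (NeZero.ne w)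
  rcases eq_or_lt_of_le hjw with hjw' | hjw'
  · -- j = w : empty
    subst hjw'
    rw [if_neg (by omega)]
    rw [Finset.card_eq_zero, Finset.filter_eq_empty_iff]
    rintro e - ⟨⟨hcard, hpe⟩, hgap⟩
    have hiff := (cycGap_eq_iff e p hpe (by omega)).mp hgap
    have hsub : e ⊆ {p} := by
      intro q hq
      obtain ⟨i, hi, rfl⟩ := exists_rep p q
      rcases Nat.eq_zero_or_pos i with h0 | h0
      · subst h0; simp
      · exact absurd hq (hiff.2 i h0 hi)
    have := Finset.card_le_card hsub
    simp at this
    omega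
  · -- j < w
    set pj : ZMod w := p + (j : ZMod w) with hpj_def
    set R : Finset (ZMod w) := (Finset.Ico (j+1) w).image (fun i : ℕ => p + (i : ZMod w)) with hR_def
    have hmemR : ∀ q : ZMod w, q ∈ R ↔ ∃ i : ℕ, (j + 1 ≤ i ∧ i < w) ∧ q = p + (i : ZMod w) := by
      intro q
      simp [hR_def, Finset.mem_image, Finset.mem_Ico, eq_comm]
    have hpR : p ∉ R := by
      rw [hmemR]
      rintro ⟨i, ⟨hi1, hi2⟩, hi3⟩
      have : (0:ℕ) = i := add_natCast_inj p hw hi2 (by simpa using hi3)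
      omega
    have hpjR : pj ∉ R := by
      rw [hmemR]
      rintro ⟨i, ⟨hi1, hi2⟩, hi3⟩
      have : j = i := add_natCast_inj p hjw' hi2 hi3
      omega
    have hppj : p ≠ pj := by
      intro h
      have : (0:ℕ) = j := add_natCast_inj p hw hjw' (by rw [Nat.cast_zero, add_zero]; exact h)
      omega
    have hRcard : R.card = w - j - 1 := by
      rw [hR_def, Finset.card_image_of_injOn, Nat.card_Ico]
      · omega
      · intro a ha b hb hab
        simp only [Finset.mem_coe, Finset.mem_Ico] at ha hb
        exact add_natCast_inj p ha.2 hb.2 hab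
    have hset : (Finset.univ.filter (fun e : Finset (ZMod w) =>
          (e.card = r ∧ p ∈ e) ∧ cycGap e p = j))
        = (R.powersetCard (r-2)).image (fun T => insert p (insert pj T)) := by
      ext e
      simp only [Finset.mem_filter, Finset.mem_univ, true_and, Finset.mem_image,
        Finset.mem_powersetCard]
      constructor
      · rintro ⟨⟨hcard, hpe⟩, hgap⟩
        obtain ⟨hpje, hmin⟩ := (cycGap_eq_iff e p hpe (by omega)).mp hgap
        refine ⟨e \ {p, pj}, ⟨?_, ?_⟩, ?_⟩
        · intro q hq
          simp only [Finset.mem_sdiff, Finset.mem_insert, Finset.mem_singleton] at hq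
          obtain ⟨hqe, hq2⟩ := hq
          push_neg at hq2
          obtain ⟨i, hi, rfl⟩ := exists_rep p q
          rw [hmemR]
          refine ⟨i, ⟨?_, hi⟩, rfl⟩
          rcases Nat.eq_zero_or_pos i with h0 | h0
          · exfalso; apply hq2.1; subst h0; simp
          by_contra hlt
          have hij : i ≠ j := fun h => hq2.2 (by rw [h])
          exact hmin i h0 (by omega) hqe
        · have hsub2 : {p, pj} ⊆ e := by
            intro q hq
            simp only [Finset.mem_insert, Finset.mem_singleton] at hq
            rcases hq with rfl | rfl
            · exact hpe
            · exact hpje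
          rw [Finset.card_sdiff_of_subset hsub2, Finset.card_pair hppj, hcard]
        · ext q
          simp only [Finset.mem_insert, Finset.mem_sdiff, Finset.mem_singleton]
          constructor
          · rintro (rfl | rfl | ⟨hq, -⟩)
            · exact hpe
            · exact hpje
            · exact hq
          · intro hq
            by_cases h1 : q = p
            · exact Or.inl h1
            by_cases h2 : q = pj
            · exact Or.inr (Or.inl h2)
            · exact Or.inr (Or.inr ⟨hq, by push_neg; exact ⟨h1, h2⟩⟩)
      · rintro ⟨T, ⟨hTR, hTcard⟩, rfl⟩
        have hpjT : pj ∉ T := fun h => hpjR (hTR h)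
        have hpT : p ∉ insert pj T := by
          simp only [Finset.mem_insert]
          rintro (h | h)
          · exact hppj h
          · exact hpR (hTR h)
        have hpe : p ∈ insert p (insert pj T) := Finset.mem_insert_self _ _
        refine ⟨⟨?_, hpe⟩, ?_⟩
        · rw [Finset.card_insert_of_notMem hpT, Finset.card_insert_of_notMem hpjT, hTcard]
          omega
        · rw [cycGap_eq_iff _ p hpe (by omega)]
          refine ⟨by simp [hpj_def], ?_⟩
          intro k hk hkj hmem
          simp only [Finset.mem_insert] at hmem
          rcases hmem with h | h | h
          · have : k = 0 := add_natCast_inj p (by omega) hw (by rw [Nat.cast_zero, add_zero]; exact h)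
            omega
          · have : k = j := add_natCast_inj p (by omega) hjw' h
            omega
          · have := (hmemR _).mp (hTR h)
            obtain ⟨i, ⟨hi1, hi2⟩, hi3⟩ := this
            have : k = i := add_natCast_inj p (by omega) hi2 hi3
            omega
    rw [hset, Finset.card_image_of_injOn, Finset.card_powersetCard, hRcard]
    · by_cases hcond : j + (r-1) ≤ w
      · rw [if_pos hcond]
      · rw [if_neg hcond, Nat.choose_eq_zero_of_lt (by omega)]
    · intro T1 h1 T2 h2 heq
      simp only [Finset.mem_coe, Finset.mem_powersetCard] at h1 h2
      have key : ∀ T : Finset (ZMod w), T ⊆ R → insert p (insert pj T) ∩ R = T := by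
        intro T hTR
        ext q
        simp only [Finset.mem_inter, Finset.mem_insert]
        constructor
        · rintro ⟨(rfl | rfl | h), hqR⟩
          · exact absurd hqR hpR
          · exact absurd hqR hpjR
          · exact h
        · intro h
          exact ⟨Or.inr (Or.inr h), hTR h⟩
      rw [← key T1 h1.1, ← key T2 h2.1]
      exact congrArg (· ∩ R) heq

lemma sum_range_w {M : Type*} [AddCommMonoid M] (f : ZMod w → M) :
    ∑ i ∈ Finset.range w, f (i : ZMod w) = ∑ x : ZMod w, f x := by
  apply Finset.sum_bij (fun (i : ℕ) (_ : i ∈ Finset.range w) => (i : ZMod w))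
  · intro a ha; exact Finset.mem_univ _
  · intro a ha b hb h
    exact natCast_zmod_inj (Finset.mem_range.mp ha) (Finset.mem_range.mp hb) h
  · intro q _
    obtain ⟨i, hi, rfl⟩ := exists_rep 0 q
    exact ⟨i, Finset.mem_range.mpr hi, by simp⟩
  · intro a ha; rfl

lemma zeta_w_eq (ℓ : ZMod w → ℕ) (a : ZMod w) : zeta ℓ a w = ∑ k : ZMod w, ℓ k := by
  unfold zeta
  rw [sum_range_w (fun x => ℓ (a + x))]
  exact Fintype.sum_equiv (Equiv.addLeft a) _ _ (fun x => rfl)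

lemma cycGap_singleton (a : ZMod w) : cycGap ({a} : Finset (ZMod w)) a = w := by
  have hw : (0:ℕ) < w := Nat.pos_of_ne_zero (NeZero.ne w)
  rw [cycGap_eq_iff _ a (Finset.mem_singleton_self a) hw]
  constructor
  · simp [ZMod.natCast_self]
  · intro k hk hkw hmem
    rw [Finset.mem_singleton] at hmem
    have : k = 0 := add_natCast_inj a hkw hw (by rw [Nat.cast_zero, add_zero]; exact hmem)
    omega

/-- Theorem 2: with `2 ≤ r ≤ w` and `b_j = Σ_k F(ζ(k,j))`,
the sum over all cyclic sf-words with `r` letters 's' of `Σ_k F(d^e_k)` equals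
`Σ_{j=1}^w (w-j-1)! b_j / ((r-2)! (w-j-(r-1))!)` (terms with `w-j-(r-1) < 0` being zero);
and for `r = 1` the corresponding sum equals `b_w = w·F(L)`. -/
theorem stmt13 (w r L : ℕ) [NeZero w] (hr : 2 ≤ r) (hrw : r ≤ w)
    (ℓ : ZMod w → ℕ) (hpos : ∀ k, 0 < ℓ k) (hsum : ∑ k, ℓ k = L) (F : ℕ → ℝ) :
    (∑ e ∈ Finset.univ.filter (fun e : Finset (ZMod w) => e.card = r),
        ∑ p ∈ e, F (zeta ℓ p (cycGap e p))
      = ∑ j ∈ Finset.Icc 1 w,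
          if j + (r - 1) ≤ w then
            ((w - j - 1).factorial : ℝ) * (∑ k : ZMod w, F (zeta ℓ k j))
              / (((r - 2).factorial : ℝ) * ((w - j - (r - 1)).factorial : ℝ))
          else 0) ∧
    (∑ e ∈ Finset.univ.filter (fun e : Finset (ZMod w) => e.card = 1),
        ∑ p ∈ e, F (zeta ℓ p (cycGap e p)) = (w : ℝ) * F L) := by
  have hw : (0:ℕ) < w := Nat.pos_of_ne_zero (NeZero.ne w)
  constructor
  · -- main part
    have step1 :
        (∑ e ∈ Finset.univ.filter (fun e : Finset (ZMod w) => e.card = r),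
            ∑ p ∈ e, F (zeta ℓ p (cycGap e p)))
          = ∑ p : ZMod w, ∑ j ∈ Finset.Icc 1 w,
              ((Finset.univ.filter (fun e : Finset (ZMod w) =>
                  (e.card = r ∧ p ∈ e) ∧ cycGap e p = j)).card : ℝ) * F (zeta ℓ p j) := by
      have h1 : ∀ e ∈ Finset.univ.filter (fun e : Finset (ZMod w) => e.card = r),
          ∑ p ∈ e, F (zeta ℓ p (cycGap e p))
            = ∑ p : ZMod w, if p ∈ e then F (zeta ℓ p (cycGap e p)) else 0 := by
        intro e _
        rw [Finset.sum_ite_mem, Finset.univ_inter]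
      rw [Finset.sum_congr rfl h1, Finset.sum_comm]
      refine Finset.sum_congr rfl fun p _ => ?_
      rw [← Finset.sum_filter, Finset.filter_filter]
      have maps : ∀ e ∈ Finset.univ.filter
          (fun e : Finset (ZMod w) => e.card = r ∧ p ∈ e),
          cycGap e p ∈ Finset.Icc 1 w := by
        intro e he
        rw [Finset.mem_filter] at he
        obtain ⟨h1', h2', h3'⟩ := cycGap_pos_mem e p he.2.2
        rw [Finset.mem_Icc]
        omega
      rw [← Finset.sum_fiberwise_of_maps_to maps (fun e => F (zeta ℓ p (cycGap e p)))]
      refine Finset.sum_congr rfl fun j hj => ?_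
      rw [Finset.filter_filter]
      rw [Finset.sum_congr rfl (fun e he => ?_), Finset.sum_const, nsmul_eq_mul]
      rw [Finset.mem_filter] at he
      rw [he.2.2]
    rw [step1, Finset.sum_comm]
    refine Finset.sum_congr rfl fun j hj => ?_
    rw [Finset.mem_Icc] at hj
    have hc := fun p : ZMod w => count_lemma r hr p hj.1 hj.2
    by_cases hcond : j + (r - 1) ≤ w
    · have hle : r - 2 ≤ w - j - 1 := by omega
      rw [if_pos hcond]
      have : ∀ p : ZMod w,
          ((Finset.univ.filter (fun e : Finset (ZMod w) =>
              (e.card = r ∧ p ∈ e) ∧ cycGap e p = j)).card : ℝ) * F (zeta ℓ p j)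
          = (((w - j - 1).choose (r - 2) : ℝ)) * F (zeta ℓ p j) := by
        intro p
        rw [hc p, if_pos hcond]
      rw [Finset.sum_congr rfl (fun p _ => this p), ← Finset.mul_sum]
      rw [Nat.cast_choose ℝ hle]
      have : w - j - 1 - (r - 2) = w - j - (r - 1) := by omega
      rw [this]
      ring
    · rw [if_neg hcond]
      rw [Finset.sum_congr rfl (fun p _ => ?_), Finset.sum_const_zero]
      rw [hc p, if_neg hcond, Nat.cast_zero, zero_mul]
  · -- r = 1 part
    have hbij :
        (∑ e ∈ Finset.univ.filter (fun e : Finset (ZMod w) => e.card = 1),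
          ∑ p ∈ e, F (zeta ℓ p (cycGap e p)))
        = ∑ a : ZMod w, F (zeta ℓ a (cycGap {a} a)) := by
      symm
      apply Finset.sum_bij (fun (a : ZMod w) (_ : a ∈ Finset.univ) => ({a} : Finset (ZMod w)))
      · intro a _
        simp
      · intro a _ b _ h
        exact Finset.singleton_injective h
      · intro e he
        rw [Finset.mem_filter, Finset.card_eq_one] at he
        obtain ⟨a, rfl⟩ := he.2
        exact ⟨a, Finset.mem_univ a, rfl⟩
      · intro a _
        rw [Finset.sum_singleton]
    rw [hbij]
    have : ∀ a : ZMod w, F (zeta ℓ a (cycGap {a} a)) = F L := by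
      intro a
      rw [cycGap_singleton, zeta_w_eq, hsum]
    rw [Finset.sum_congr rfl (fun a _ => this a), Finset.sum_const, Finset.card_univ,
      ZMod.card, nsmul_eq_mul]
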